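/- Let n ≥ 3, 0 < m < (n-2)/n, and suppose f : (0,∞) → (0,∞) is twice continuously differentiable and satisfies ((n-1)/m)((fᵐ)'' + ((n-1)/r)(fᵐ)') + α f + β r f' = 0 on (0,∞), where β < 0 and α = 2β/(1-m). Define g(r) := r^{-(n-2)/m} f(1/r) for r > 0. Then g is positive and satisfies ((n-1)/m)((gᵐ)'' + ((n-1)/r)(gᵐ)') + r^{(n-2)/m - n - 2}(α̃ g + β̃ r g') = 0 on (0,∞), where α̃ = α - ((n-2)/m)β and β̃ = -β. -/

import Mathlib

open Set

theorem inversion_of_selfsimilar_profile (n : ℕ) (hn : 3 ≤ n) (m β α : ℝ)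
    (hm0 : 0 < m) (hm1 : m < ((n : ℝ) - 2) / n) (hβ : β < 0)
    (hα : α = 2 * β / (1 - m))
    (f : ℝ → ℝ)
    (hf_pos : ∀ r ∈ Ioi (0 : ℝ), 0 < f r)
    (hf_reg : ContDiffOn ℝ 2 f (Ioi (0 : ℝ)))
    (hf_ode : ∀ r ∈ Ioi (0 : ℝ),
      ((n : ℝ) - 1) / m *
          (deriv (deriv (fun s => f s ^ m)) r +
            ((n : ℝ) - 1) / r * deriv (fun s => f s ^ m) r) +
        α * f r + β * r * deriv f r = 0)
    (g : ℝ → ℝ)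
    (hg_def : ∀ r ∈ Ioi (0 : ℝ), g r = r ^ (-((n : ℝ) - 2) / m) * f r⁻¹)
    (αt βt : ℝ)
    (hαt : αt = α - ((n : ℝ) - 2) / m * β) (hβt : βt = -β) :
    ∀ r ∈ Ioi (0 : ℝ), 0 < g r ∧
      ((n : ℝ) - 1) / m *
          (deriv (deriv (fun s => g s ^ m)) r +
            ((n : ℝ) - 1) / r * deriv (fun s => g s ^ m) r) +
        r ^ (((n : ℝ) - 2) / m - n - 2) * (αt * g r + βt * r * deriv g r) = 0 := by
  have hm : m ≠ 0 := ne_of_gt hm0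
  have h3 : (3:ℝ) ≤ (n:ℝ) := by exact_mod_cast hn
  have hn1 : ((n : ℝ) - 1) ≠ 0 := by linarith
  set F : ℝ → ℝ := fun x => f x ^ m with hF
  have hF2 : ContDiffOn ℝ 2 F (Ioi 0) :=
    fun x hx => (hf_reg x hx).rpow_const_of_ne (ne_of_gt (hf_pos x hx))
  have hFd : ∀ x ∈ Ioi (0:ℝ), DifferentiableAt ℝ F x := fun x hx =>
    ((hF2.differentiableOn (by norm_num)) x hx).differentiableAt (isOpen_Ioi.mem_nhds hx)
  have hF'1 : ContDiffOn ℝ 1 (deriv F) (Ioi 0) := hF2.deriv_of_isOpen isOpen_Ioi (by norm_num)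
  have hF'd : ∀ x ∈ Ioi (0:ℝ), DifferentiableAt ℝ (deriv F) x := fun x hx =>
    ((hF'1.differentiableOn (by norm_num)) x hx).differentiableAt (isOpen_Ioi.mem_nhds hx)
  have hfd : ∀ x ∈ Ioi (0:ℝ), DifferentiableAt ℝ f x := fun x hx =>
    ((hf_reg.differentiableOn (by norm_num)) x hx).differentiableAt (isOpen_Ioi.mem_nhds hx)
  -- g^m coincides with x ↦ x^(-(n-2)) * F x⁻¹ on Ioi 0
  have hgm_eq : ∀ x ∈ Ioi (0:ℝ), g x ^ m = x ^ (-((n:ℝ) - 2)) * F x⁻¹ := by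
    intro x hx
    have hx0 : (0:ℝ) < x := hx
    have hfx : 0 < f x⁻¹ := hf_pos _ (by simpa using inv_pos.mpr hx0)
    rw [hg_def x hx, Real.mul_rpow (Real.rpow_nonneg hx0.le _) hfx.le,
      ← Real.rpow_mul hx0.le, div_mul_cancel₀ _ hm]
  -- first derivative of g^m on Ioi 0
  have hD1 : ∀ x ∈ Ioi (0:ℝ), deriv (fun y => g y ^ m) x
      = -((n:ℝ)-2) * x ^ (-((n:ℝ)-2) - 1) * F x⁻¹ - x ^ (-(n:ℝ)) * deriv F x⁻¹ := by
    intro x hx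
    have hx0 : (0:ℝ) < x := hx
    have hxne : x ≠ 0 := ne_of_gt hx0
    have hxI : x⁻¹ ∈ Ioi (0:ℝ) := by simpa using inv_pos.mpr hx0
    have h1 : HasDerivAt (fun y : ℝ => y ^ (-((n:ℝ)-2))) (-((n:ℝ)-2) * x ^ (-((n:ℝ)-2) - 1)) x :=
      Real.hasDerivAt_rpow_const (Or.inl hxne)
    have h2 : HasDerivAt (fun y : ℝ => F y⁻¹) (deriv F x⁻¹ * -(x ^ 2)⁻¹) x :=
      (hFd _ hxI).hasDerivAt.comp x (hasDerivAt_inv hxne)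
    have h3 := h1.mul h2
    have heq : deriv (fun y => g y ^ m) x = deriv (fun y : ℝ => y ^ (-((n:ℝ)-2)) * F y⁻¹) x :=
      Filter.EventuallyEq.deriv_eq
        (Filter.eventuallyEq_of_mem (isOpen_Ioi.mem_nhds hx) hgm_eq)
    rw [heq, (show HasDerivAt (fun y : ℝ => y ^ (-((n:ℝ)-2)) * F y⁻¹) _ x from h3).deriv]
    have hxx : x ^ (-((n:ℝ)-2)) * (x ^ 2)⁻¹ = x ^ (-(n:ℝ)) := by
      rw [show ((x:ℝ) ^ (2:ℕ)) = x ^ ((2:ℕ):ℝ) from (Real.rpow_natCast x 2).symm,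
        ← Real.rpow_neg hx0.le, ← Real.rpow_add hx0]
      congr 1; ring
    linear_combination (-(deriv F x⁻¹)) * hxx
  intro r hr
  have hr0 : (0:ℝ) < r := hr
  have hrne : r ≠ 0 := ne_of_gt hr0
  have hsI : r⁻¹ ∈ Ioi (0:ℝ) := by simpa using inv_pos.mpr hr0
  have hgr : g r = r ^ (-((n:ℝ)-2)/m) * f r⁻¹ := hg_def r hr
  have hg_pos : 0 < g r := by
    rw [hgr]; exact mul_pos (Real.rpow_pos_of_pos hr0 _) (hf_pos _ hsI)
  refine ⟨hg_pos, ?_⟩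
  -- derivative of g at r
  have hDg : deriv g r = -((n:ℝ)-2)/m * r ^ (-((n:ℝ)-2)/m - 1) * f r⁻¹
      + r ^ (-((n:ℝ)-2)/m) * (deriv f r⁻¹ * -(r ^ 2)⁻¹) := by
    have h1 : HasDerivAt (fun y : ℝ => y ^ (-((n:ℝ)-2)/m))
        (-((n:ℝ)-2)/m * r ^ (-((n:ℝ)-2)/m - 1)) r :=
      Real.hasDerivAt_rpow_const (Or.inl hrne)
    have h2 : HasDerivAt (fun y : ℝ => f y⁻¹) (deriv f r⁻¹ * -(r ^ 2)⁻¹) r :=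
      (hfd _ hsI).hasDerivAt.comp r (hasDerivAt_inv hrne)
    have heq : deriv g r = deriv (fun y : ℝ => y ^ (-((n:ℝ)-2)/m) * f y⁻¹) r :=
      Filter.EventuallyEq.deriv_eq
        (Filter.eventuallyEq_of_mem (isOpen_Ioi.mem_nhds hr) hg_def)
    rw [heq, (show HasDerivAt (fun y : ℝ => y ^ (-((n:ℝ)-2)/m) * f y⁻¹) _ r from h1.mul h2).deriv]
  -- second derivative of g^m at r
  have hD2 : deriv (deriv (fun y => g y ^ m)) r
      = (-((n:ℝ)-2) * ((-((n:ℝ)-2) - 1) * r ^ (-((n:ℝ)-2) - 1 - 1))) * F r⁻¹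
        + (-((n:ℝ)-2) * r ^ (-((n:ℝ)-2) - 1)) * (deriv F r⁻¹ * -(r ^ 2)⁻¹)
        - ((-(n:ℝ)) * r ^ (-(n:ℝ) - 1) * deriv F r⁻¹
          + r ^ (-(n:ℝ)) * (deriv (deriv F) r⁻¹ * -(r ^ 2)⁻¹)) := by
    have t1 : HasDerivAt (fun y : ℝ => -((n:ℝ)-2) * y ^ (-((n:ℝ)-2) - 1))
        (-((n:ℝ)-2) * ((-((n:ℝ)-2) - 1) * r ^ (-((n:ℝ)-2) - 1 - 1))) r :=
      (Real.hasDerivAt_rpow_const (Or.inl hrne)).const_mul _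
    have t2 : HasDerivAt (fun y : ℝ => F y⁻¹) (deriv F r⁻¹ * -(r ^ 2)⁻¹) r :=
      (hFd _ hsI).hasDerivAt.comp r (hasDerivAt_inv hrne)
    have t3 : HasDerivAt (fun y : ℝ => y ^ (-(n:ℝ))) ((-(n:ℝ)) * r ^ (-(n:ℝ) - 1)) r :=
      Real.hasDerivAt_rpow_const (Or.inl hrne)
    have t4 : HasDerivAt (fun y : ℝ => deriv F y⁻¹) (deriv (deriv F) r⁻¹ * -(r ^ 2)⁻¹) r :=
      (hF'd _ hsI).hasDerivAt.comp r (hasDerivAt_inv hrne)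
    have tot := ((t1.mul t2).sub (t3.mul t4))
    have heq : deriv (fun y => g y ^ m) =ᶠ[nhds r]
        (fun y : ℝ => -((n:ℝ)-2) * y ^ (-((n:ℝ)-2) - 1) * F y⁻¹ - y ^ (-(n:ℝ)) * deriv F y⁻¹) :=
      Filter.eventuallyEq_of_mem (isOpen_Ioi.mem_nhds hr) hD1
    rw [heq.deriv_eq, (show HasDerivAt (fun y : ℝ => -((n:ℝ)-2) * y ^ (-((n:ℝ)-2) - 1) * F y⁻¹ - y ^ (-(n:ℝ)) * deriv F y⁻¹) _ r from tot).deriv]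
  -- the ODE for f at r⁻¹, cleared of denominators
  have hODE : ((n:ℝ)-1) * r * deriv (deriv F) r⁻¹ + ((n:ℝ)-1)^2 * r^2 * deriv F r⁻¹
      + m * α * r * f r⁻¹ + m * β * deriv f r⁻¹ = 0 := by
    have h := hf_ode r⁻¹ hsI
    have hri : ((n:ℝ)-1) / r⁻¹ = ((n:ℝ)-1) * r := by field_simp
    rw [hri] at h
    have := mul_eq_zero_of_right (m * r) h
    field_simp at this
    simp only [one_div] at this
    linear_combination this
  have h0 : ((n:ℝ)-1) * r ≠ 0 := mul_ne_zero hn1 hrne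
  have hb'' : deriv (deriv F) r⁻¹
      = -(((n:ℝ)-1)^2 * r^2 * deriv F r⁻¹ + m * α * r * f r⁻¹ + m * β * deriv f r⁻¹)
        / (((n:ℝ)-1) * r) := by
    rw [eq_div_iff h0]; linear_combination hODE
  -- rpow bookkeeping
  have e1 : r ^ (-((n:ℝ)-2) - 1) = r ^ (-((n:ℝ)-2)) * r⁻¹ := by
    rw [show -((n:ℝ)-2) - 1 = -((n:ℝ)-2) + (-1) by ring, Real.rpow_add hr0, Real.rpow_neg_one]
  have e2 : r ^ (-((n:ℝ)-2) - 1 - 1) = r ^ (-((n:ℝ)-2)) * r⁻¹ * r⁻¹ := by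
    rw [show -((n:ℝ)-2) - 1 - 1 = -((n:ℝ)-2) + (-1) + (-1) by ring, Real.rpow_add hr0,
      Real.rpow_add hr0, Real.rpow_neg_one]
  have e3 : r ^ (-(n:ℝ)) = r ^ (-((n:ℝ)-2)) * r⁻¹ * r⁻¹ := by
    rw [show -(n:ℝ) = -((n:ℝ)-2) + (-1) + (-1) by ring, Real.rpow_add hr0,
      Real.rpow_add hr0, Real.rpow_neg_one]
  have e4 : r ^ (-(n:ℝ) - 1) = r ^ (-((n:ℝ)-2)) * r⁻¹ * r⁻¹ * r⁻¹ := by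
    rw [show -(n:ℝ) - 1 = -((n:ℝ)-2) + (-1) + (-1) + (-1) by ring, Real.rpow_add hr0,
      Real.rpow_add hr0, Real.rpow_add hr0, Real.rpow_neg_one]
  have e5 : r ^ (-((n:ℝ)-2)/m - 1) = r ^ (-((n:ℝ)-2)/m) * r⁻¹ := by
    rw [show -((n:ℝ)-2)/m - 1 = -((n:ℝ)-2)/m + (-1) by ring, Real.rpow_add hr0,
      Real.rpow_neg_one]
  have e6 : r ^ (((n:ℝ)-2)/m - (n:ℝ) - 2)
      = (r ^ (-((n:ℝ)-2)/m))⁻¹ * r ^ (-((n:ℝ)-2)) * r⁻¹ * r⁻¹ * r⁻¹ * r⁻¹ := by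
    rw [show ((n:ℝ)-2)/m - (n:ℝ) - 2
        = -(-((n:ℝ)-2)/m) + (-((n:ℝ)-2)) + (-1) + (-1) + (-1) + (-1) by ring,
      Real.rpow_add hr0, Real.rpow_add hr0, Real.rpow_add hr0, Real.rpow_add hr0,
      Real.rpow_add hr0, Real.rpow_neg_one, Real.rpow_neg hr0.le]
  have hQ : r ^ (-((n:ℝ)-2)/m) ≠ 0 := ne_of_gt (Real.rpow_pos_of_pos hr0 _)
  rw [hD2, hD1 r hr, hDg, hgr, hb'', hαt, hβt, e1, e2, e3, e4, e5, e6]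
  field_simp
  ring
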